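/- arXiv:2304.06318 — 2 statements merged into one kernel-verified Lean document; each statement's English description precedes it below -/
import Mathlib

section
/- Let G be a finite connected graph with set of blocks 𝓑. Then the connected blocks polytope CBP(G) ⊆ ℝ^𝓑 has dimension |𝓑|; in particular, CBP(G) is full-dimensional. -/
open Set

noncomputable section

namespace ConnectedBlocksPaper

variable {V : Type} [Fintype V] [DecidableEq V]

/-- A subgraph is 2-connected: at least 3 vertices and removing any vertex keeps it connected. -/
def IsTwoConnectedSub (G : SimpleGraph V) (H : G.Subgraph) : Prop :=
  3 ≤ H.verts.ncard ∧ ∀ v ∈ H.verts, (H.deleteVerts {v}).Connected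

/-- A block of `G`: a maximal 2-connected subgraph, or a bridge together with its two
incident vertices. -/
def IsBlock (G : SimpleGraph V) (B : G.Subgraph) : Prop :=
  (IsTwoConnectedSub G B ∧ ∀ B' : G.Subgraph, IsTwoConnectedSub G B' → B ≤ B' → B' = B)
  ∨ (∃ (u v : V) (h : G.Adj u v), G.IsBridge s(u, v) ∧ B = G.subgraphOfAdj h)

/-- The set `𝓑` of blocks of `G`, as a type. -/
abbrev Block (G : SimpleGraph V) := {B : G.Subgraph // IsBlock G B}

/-- The subgraph `G[𝓐]` induced by a set of blocks. -/
def blockUnion (G : SimpleGraph V) (𝓐 : Set (Block G)) : G.Subgraph :=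
  ⨆ B ∈ 𝓐, (B : G.Subgraph)

/-- `G[𝓐]` is connected (the empty set of blocks counts as connected). -/
def ConnBlocks (G : SimpleGraph V) (𝓐 : Set (Block G)) : Prop :=
  𝓐 = ∅ ∨ (blockUnion G 𝓐).Connected

/-- The incidence vector `χ^𝓐 ∈ {0,1}^𝓑` of a set of blocks `𝓐 ⊆ 𝓑`. -/
def incVec (G : SimpleGraph V) (𝓐 : Set (Block G)) : Block G → ℝ :=
  Set.indicator 𝓐 1

/-- The connected blocks polytope `CBP(G) ⊆ ℝ^𝓑`. -/
def CBP (G : SimpleGraph V) : Set (Block G → ℝ) :=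
  convexHull ℝ {x | ∃ 𝓐 : Set (Block G), ConnBlocks G 𝓐 ∧ x = incVec G 𝓐}

/-- `F` is a face of the convex set `P`. -/
def IsFaceOf {E : Type*} [AddCommGroup E] [Module ℝ E] (P F : Set E) : Prop :=
  F ⊆ P ∧ Convex ℝ F ∧
    ∀ x ∈ P, ∀ y ∈ P, ∀ t : ℝ, 0 < t → t < 1 →
      t • x + (1 - t) • y ∈ F → x ∈ F ∧ y ∈ F

/-- The dimension of a polytope: the dimension of its affine hull. -/
def polyDim {E : Type*} [AddCommGroup E] [Module ℝ E] (P : Set E) : ℕ :=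
  Module.finrank ℝ (affineSpan ℝ P).direction

/-- A facet is a face of dimension `dim P - 1`. -/
def IsFacetOf {E : Type*} [AddCommGroup E] [Module ℝ E] (P F : Set E) : Prop :=
  IsFaceOf P F ∧ polyDim F = polyDim P - 1

/-- `v` is a cut vertex of `G`: deleting `v` from the connected graph `G` leaves more than
one component. -/
def IsCutVertex (G : SimpleGraph V) (v : V) : Prop :=
  ¬ (G.induce ({v}ᶜ : Set V)).Preconnected

/-- `𝓑⟨𝓐⟩`: the smallest set of blocks inducing a connected subgraph and containing `𝓐`. -/
def blockClosure (G : SimpleGraph V) (𝓐 : Set (Block G)) : Set (Block G) :=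
  ⋂₀ {𝓒 : Set (Block G) | 𝓐 ⊆ 𝓒 ∧ ConnBlocks G 𝓒}

/-- An independent set of blocks: no two blocks share a common vertex. -/
def IndepBlocks (G : SimpleGraph V) (𝓘 : Set (Block G)) : Prop :=
  ∀ B₁ ∈ 𝓘, ∀ B₂ ∈ 𝓘, B₁ ≠ B₂ →
    ((B₁ : G.Subgraph).verts ∩ (B₂ : G.Subgraph).verts) = ∅

/-- `(𝓘, α)` is an independent blocks inequality. -/
def IsIBI (G : SimpleGraph V) (𝓘 : Set (Block G)) (α : Block G → ℤ) : Prop :=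
  IndepBlocks G 𝓘 ∧
  (∀ B, B ∉ blockClosure G 𝓘 → α B = 0) ∧
  (∀ B ∈ 𝓘, α B = 1) ∧
  (∀ B ∈ blockClosure G 𝓘 \ 𝓘, α B ≤ 0) ∧
  (∑ᶠ B ∈ blockClosure G 𝓘 \ 𝓘, α B = -((𝓘.ncard : ℤ) - 1)) ∧
  (∀ I ⊆ 𝓘, ∑ᶠ B ∈ blockClosure G I \ 𝓘, α B ≤ -((I.ncard : ℤ) - 1))

/-- `𝓑[H]`: the set of blocks (of `G`) of the subgraph `H`. -/
def blocksOf (G : SimpleGraph V) (H : G.Subgraph) : Set (Block G) :=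
  {B : Block G | (B : G.Subgraph) ≤ H}

/-- `𝒦_v`: the components of `G - v` with `v` (and its incident edges) added back. -/
def Kv (G : SimpleGraph V) (v : V) : Set G.Subgraph :=
  {H | ∃ C : (G.induce ({v}ᶜ : Set V)).ConnectedComponent,
        H = (⊤ : G.Subgraph).induce (Subtype.val '' C.supp ∪ {v})}

/-- A polytope is simple if every vertex lies in exactly `dim P` facets. -/
def IsSimplePolytope {E : Type*} [AddCommGroup E] [Module ℝ E] (P : Set E) : Prop :=
  ∀ x ∈ P.extremePoints ℝ, {F : Set E | IsFacetOf P F ∧ x ∈ F}.ncard = polyDim P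

/-- A simplex: the convex hull of an affinely independent finite set. -/
def IsSimplex {E : Type*} [AddCommGroup E] [Module ℝ E] (F : Set E) : Prop :=
  ∃ s : Finset E, AffineIndependent ℝ ((↑) : s → E) ∧ F = convexHull ℝ (s : Set E)

/-- A polytope is simplicial if every facet is a simplex. -/
def IsSimplicialPolytope {E : Type*} [AddCommGroup E] [Module ℝ E] (P : Set E) : Prop :=
  ∀ F : Set E, IsFacetOf P F → IsSimplex F

/-- The graph of a polytope: extreme points, adjacent when they span a 1-dimensional face. -/
def polyGraph {E : Type*} [AddCommGroup E] [Module ℝ E] (P : Set E) : SimpleGraph E where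
  Adj x y := x ≠ y ∧ x ∈ P.extremePoints ℝ ∧ y ∈ P.extremePoints ℝ ∧
    IsFaceOf P (segment ℝ x y) ∧ polyDim (segment ℝ x y) = 1
  symm := by
    constructor
    rintro x y ⟨hxy, hx, hy, hF, hd⟩
    exact ⟨hxy.symm, hy, hx, by rwa [segment_symm], by rwa [segment_symm]⟩
  loopless := by constructor; rintro x ⟨h, -⟩; exact h rfl

/-- Subgraphs of a graph on a finite vertex type form a finite type. -/
instance subgraph_finite (G : SimpleGraph V) : Finite G.Subgraph := by
  have : Function.Injective
      (fun H : G.Subgraph => ((H.verts, H.Adj) : Set V × (V → V → Prop))) := by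
    intro H₁ H₂ h
    simp only [Prod.mk.injEq] at h
    exact SimpleGraph.Subgraph.ext h.1 h.2
  exact Finite.of_injective _ this

/-- A 2-connected subgraph is connected. -/
lemma twoConnected_connected {G : SimpleGraph V} {H : G.Subgraph}
    (h : IsTwoConnectedSub G H) : H.Connected := by
  obtain ⟨h3, hdel⟩ := h
  rw [SimpleGraph.Subgraph.connected_iff]
  constructor
  · constructor
    rintro ⟨a, ha⟩ ⟨b, hb⟩
    have hne : (H.verts \ {a, b}).Nonempty := by
      rw [Set.nonempty_iff_ne_empty]
      intro hempty
      have hsub : H.verts ⊆ {a, b} := by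
        intro x hx
        by_contra hxab
        exact (Set.eq_empty_iff_forall_notMem.1 hempty x) ⟨hx, hxab⟩
      have := Set.ncard_le_ncard hsub (Set.toFinite _)
      have h2 : ({a, b} : Set V).ncard ≤ 2 :=
        (Set.ncard_insert_le a {b}).trans (by simp [Set.ncard_singleton])
      omega
    obtain ⟨c, hcH, hcab⟩ := hne
    simp only [Set.mem_insert_iff, Set.mem_singleton_iff, not_or] at hcab
    have hconn := hdel c hcH
    have ha' : a ∈ (H.deleteVerts {c}).verts := by
      simp [SimpleGraph.Subgraph.deleteVerts_verts, ha, Ne.symm hcab.1]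
    have hb' : b ∈ (H.deleteVerts {c}).verts := by
      simp [SimpleGraph.Subgraph.deleteVerts_verts, hb, Ne.symm hcab.2]
    have hreach := hconn.coe.preconnected ⟨a, ha'⟩ ⟨b, hb'⟩
    have hmap := hreach.map (SimpleGraph.Subgraph.inclusion
      (SimpleGraph.Subgraph.deleteVerts_le (s := {c})))
    exact hmap
  · obtain ⟨x, hx⟩ := Set.nonempty_of_ncard_ne_zero (by omega : H.verts.ncard ≠ 0)
    exact ⟨x, hx⟩

/-- Blocks are connected subgraphs. -/
lemma block_connected {G : SimpleGraph V} (B : Block G) :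
    (B : G.Subgraph).Connected := by
  obtain h2c | ⟨u, v, h, -, hB⟩ := B.2
  · exact twoConnected_connected h2c.1
  · rw [hB]; exact SimpleGraph.Subgraph.subgraphOfAdj_connected h

lemma incVec_mem_CBP {G : SimpleGraph V} {𝓐 : Set (Block G)} (h : ConnBlocks G 𝓐) :
    incVec G 𝓐 ∈ CBP G :=
  subset_convexHull ℝ _ ⟨𝓐, h, rfl⟩

lemma zero_mem_CBP (G : SimpleGraph V) : (0 : Block G → ℝ) ∈ CBP G := by
  have h : incVec G (∅ : Set (Block G)) = 0 := Set.indicator_empty 1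
  rw [← h]
  exact incVec_mem_CBP (Or.inl rfl)

lemma single_mem_CBP {G : SimpleGraph V} (B : Block G) :
    incVec G ({B} : Set (Block G)) ∈ CBP G := by
  refine incVec_mem_CBP (Or.inr ?_)
  have : blockUnion G ({B} : Set (Block G)) = (B : G.Subgraph) := by
    simp [blockUnion]
  rw [this]
  exact block_connected B

/-- `CBP(G)` has dimension `|𝓑|`; in particular it is full-dimensional. -/
theorem cbp_dimension (G : SimpleGraph V) (hG : G.Connected) :
    polyDim (CBP G) = Nat.card (Block G) := by
  classical
  cases nonempty_fintype (Block G)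
  have hspan : vectorSpan ℝ (CBP G) = ⊤ := by
    rw [← (Pi.basisFun ℝ (Block G)).span_eq]
    refine le_antisymm (by simp) ?_
    refine Submodule.span_le.2 ?_
    rintro _ ⟨B, rfl⟩
    rw [Pi.basisFun_apply]
    have hsingle : incVec G ({B} : Set (Block G)) = Pi.single B 1 := by
      funext B'
      simp only [incVec, Set.indicator_apply, Set.mem_singleton_iff, Pi.one_apply]
      by_cases h : B' = B
      · subst h; simp
      · simp [h, Pi.single_eq_of_ne h]
    have := vsub_mem_vectorSpan ℝ (single_mem_CBP B) (zero_mem_CBP G)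
    simpa [hsingle, vsub_eq_sub] using this
  rw [polyDim, direction_affineSpan, hspan, finrank_top, Module.finrank_pi,
    Nat.card_eq_fintype_card]

end ConnectedBlocksPaper
end
end

section
/- Let G be a finite connected graph with set of blocks 𝓑. Let (𝓘¹, α¹) and (𝓘², α²) be independent blocks inequalities with 𝓑⟨𝓘¹⟩ ∩ 𝓑⟨𝓘²⟩ = ∅ such that 𝓘¹ ∪ 𝓘² is an independent set of blocks. Let P ⊆ G be the unique block path connecting 𝓑⟨𝓘¹⟩ and 𝓑⟨𝓘²⟩ that contains no block of 𝓑⟨𝓘¹⟩ or 𝓑⟨𝓘²⟩, and let B' be a block of P. Define β by β_B = α¹_B if B ∈ 𝓑⟨𝓘¹⟩, β_B = α²_B if B ∈ 𝓑⟨𝓘²⟩, β_{B'} = −1, and β_B = 0 otherwise. Then (𝓘¹ ∪ 𝓘², β) is an independent blocks inequality. -/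
open Set

noncomputable section

namespace ConnectedBlocksPaper

variable {V : Type} [Fintype V] [DecidableEq V]

section Aux
set_option linter.unusedSectionVars false

lemma finsum_mem_zero_diff {X : Type*} [Finite X] (f : X → ℤ) {u s : Set X} (h : u ⊆ s)
    (hz : ∀ x ∈ s, x ∉ u → f x = 0) : ∑ᶠ x ∈ s, f x = ∑ᶠ x ∈ u, f x := by
  classical
  rw [finsum_mem_eq_finite_toFinset_sum f s.toFinite,
    finsum_mem_eq_finite_toFinset_sum f u.toFinite]
  refine (Finset.sum_subset ?_ ?_).symm
  · intro x hx
    simp only [Set.Finite.mem_toFinset] at *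
    exact h hx
  · intro x hx hnx
    simp only [Set.Finite.mem_toFinset] at *
    exact hz x hx hnx

lemma finsum_mem_le_diff {X : Type*} [Finite X] (f : X → ℤ) {u s : Set X} (h : u ⊆ s)
    (hz : ∀ x ∈ s, x ∉ u → f x ≤ 0) : ∑ᶠ x ∈ s, f x ≤ ∑ᶠ x ∈ u, f x := by
  classical
  rw [finsum_mem_eq_finite_toFinset_sum f s.toFinite,
    finsum_mem_eq_finite_toFinset_sum f u.toFinite]
  have hsub : u.toFinite.toFinset ⊆ s.toFinite.toFinset := by
    intro x hx; simp only [Set.Finite.mem_toFinset] at *; exact h hx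
  rw [← Finset.sum_sdiff hsub]
  have h1 : ∑ x ∈ s.toFinite.toFinset \ u.toFinite.toFinset, f x ≤ 0 := by
    apply Finset.sum_nonpos
    intro x hx
    simp only [Finset.mem_sdiff, Set.Finite.mem_toFinset] at hx
    exact hz x hx.1 hx.2
  linarith

lemma finsum_mem_nonpos' {X : Type*} [Finite X] (f : X → ℤ) {s : Set X}
    (hz : ∀ x ∈ s, f x ≤ 0) : ∑ᶠ x ∈ s, f x ≤ 0 := by
  have := finsum_mem_le_diff f (Set.empty_subset s) (fun x hx _ => hz x hx)
  simpa [finsum_mem_empty] using this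

variable {V : Type} [Fintype V] [DecidableEq V] {G : SimpleGraph V}

instance : Finite (G.Subgraph) := by
  apply Finite.of_injective (fun H => (H.verts, H.Adj))
  intro a b h
  simp only [Prod.mk.injEq] at h
  exact SimpleGraph.Subgraph.ext h.1 h.2

lemma mem_blockClosure {𝓐 : Set (Block G)} {B : Block G} :
    B ∈ blockClosure G 𝓐 ↔ ∀ 𝓒, 𝓐 ⊆ 𝓒 → ConnBlocks G 𝓒 → B ∈ 𝓒 := by
  simp [blockClosure, Set.mem_sInter, and_imp]

lemma subset_blockClosure (𝓐 : Set (Block G)) : 𝓐 ⊆ blockClosure G 𝓐 :=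
  fun _ hB => mem_blockClosure.mpr fun _ h _ => h hB

lemma blockClosure_mono {𝓐 𝓑 : Set (Block G)} (h : 𝓐 ⊆ 𝓑) :
    blockClosure G 𝓐 ⊆ blockClosure G 𝓑 :=
  fun _ hB => mem_blockClosure.mpr fun 𝓒 h𝓒 hc => mem_blockClosure.mp hB 𝓒 (h.trans h𝓒) hc

lemma block_verts_nonempty (B : Block G) : (B : G.Subgraph).verts.Nonempty := by
  rcases B.2 with ⟨⟨h3, -⟩, -⟩ | ⟨u, v, h, -, hB⟩
  · rcases Set.eq_empty_or_nonempty (B : G.Subgraph).verts with he | hne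
    · rw [he] at h3; simp at h3
    · exact hne
  · rw [hB]; exact ⟨u, by simp⟩

lemma coe_le_blockUnion {𝓐 : Set (Block G)} {B : Block G} (h : B ∈ 𝓐) :
    (B : G.Subgraph) ≤ blockUnion G 𝓐 :=
  le_biSup (fun B : Block G => (B : G.Subgraph)) h

lemma blockUnion_union (s t : Set (Block G)) :
    blockUnion G (s ∪ t) = blockUnion G s ⊔ blockUnion G t := by
  rw [blockUnion, iSup_union]; rfl

lemma connBlocks_of_connected {𝓒 : Set (Block G)} (h : ConnBlocks G 𝓒) {B : Block G}
    (hB : B ∈ 𝓒) : (blockUnion G 𝓒).Connected := by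
  rcases h with h | h
  · rw [h] at hB; exact absurd hB (Set.notMem_empty B)
  · exact h

end Aux

/-- combining two independent blocks inequalities with disjoint closures along a
block `B'` of the connecting block path (the blocks of the connecting path are exactly
`𝓑⟨𝓘¹ ∪ 𝓘²⟩ ∖ (𝓑⟨𝓘¹⟩ ∪ 𝓑⟨𝓘²⟩)`) yields an independent blocks inequality. -/
theorem ibi_combine (G : SimpleGraph V) (hG : G.Connected)
    (𝓘₁ 𝓘₂ : Set (Block G)) (α₁ α₂ : Block G → ℤ)
    (h₁ : IsIBI G 𝓘₁ α₁) (h₂ : IsIBI G 𝓘₂ α₂)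
    (hdisj : blockClosure G 𝓘₁ ∩ blockClosure G 𝓘₂ = ∅)
    (hind : IndepBlocks G (𝓘₁ ∪ 𝓘₂))
    (B' : Block G)
    (hB' : B' ∈ blockClosure G (𝓘₁ ∪ 𝓘₂) \ (blockClosure G 𝓘₁ ∪ blockClosure G 𝓘₂))
    (β : Block G → ℤ)
    (hβ₁ : ∀ B ∈ blockClosure G 𝓘₁, β B = α₁ B)
    (hβ₂ : ∀ B ∈ blockClosure G 𝓘₂, β B = α₂ B)
    (hβ' : β B' = -1)
    (hβ₀ : ∀ B, B ∉ blockClosure G 𝓘₁ → B ∉ blockClosure G 𝓘₂ → B ≠ B' → β B = 0) :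
    IsIBI G (𝓘₁ ∪ 𝓘₂) β := by
  classical
  obtain ⟨hind₁, hz₁, hone₁, hnp₁, hsum₁, hineq₁⟩ := h₁
  obtain ⟨hind₂, hz₂, hone₂, hnp₂, hsum₂, hineq₂⟩ := h₂
  obtain ⟨hB'mem, hB'not⟩ := hB'
  have hB'1 : B' ∉ blockClosure G 𝓘₁ := fun h => hB'not (Set.mem_union_left _ h)
  have hB'2 : B' ∉ blockClosure G 𝓘₂ := fun h => hB'not (Set.mem_union_right _ h)
  have hsub1 : blockClosure G 𝓘₁ ⊆ blockClosure G (𝓘₁ ∪ 𝓘₂) :=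
    blockClosure_mono Set.subset_union_left
  have hsub2 : blockClosure G 𝓘₂ ⊆ blockClosure G (𝓘₁ ∪ 𝓘₂) :=
    blockClosure_mono Set.subset_union_right
  have hdis : ∀ B, B ∈ blockClosure G 𝓘₁ → B ∈ blockClosure G 𝓘₂ → False := by
    intro B hB1 hB2
    have : B ∈ (∅ : Set (Block G)) := hdisj ▸ ⟨hB1, hB2⟩
    exact this
  have hIdis : Disjoint 𝓘₁ 𝓘₂ := by
    rw [Set.disjoint_left]
    intro B hB1 hB2
    exact hdis B (subset_blockClosure _ hB1) (subset_blockClosure _ hB2)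
  have hB'nI : B' ∉ 𝓘₁ ∪ 𝓘₂ := by
    rintro (h | h)
    · exact hB'1 (subset_blockClosure _ h)
    · exact hB'2 (subset_blockClosure _ h)
  -- key graph-theoretic fact: any closure of a set meeting both 𝓘₁ and 𝓘₂ contains B'
  have key : ∀ I : Set (Block G), I ⊆ 𝓘₁ ∪ 𝓘₂ → (I ∩ 𝓘₁).Nonempty → (I ∩ 𝓘₂).Nonempty →
      B' ∈ blockClosure G I := by
    rintro I hI ⟨B₁, hB₁I, hB₁⟩ ⟨B₂, hB₂I, hB₂⟩
    rw [mem_blockClosure]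
    intro 𝓒 hIC hCc
    obtain ⟨𝓒₁, hs₁, hc₁, hn₁⟩ : ∃ 𝓒₁, 𝓘₁ ⊆ 𝓒₁ ∧ ConnBlocks G 𝓒₁ ∧ B' ∉ 𝓒₁ := by
      by_contra hcon
      push_neg at hcon
      exact hB'1 (mem_blockClosure.mpr fun 𝓓 hs hc => hcon 𝓓 hs hc)
    obtain ⟨𝓒₂, hs₂, hc₂, hn₂⟩ : ∃ 𝓒₂, 𝓘₂ ⊆ 𝓒₂ ∧ ConnBlocks G 𝓒₂ ∧ B' ∉ 𝓒₂ := by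
      by_contra hcon
      push_neg at hcon
      exact hB'2 (mem_blockClosure.mpr fun 𝓓 hs hc => hcon 𝓓 hs hc)
    have hc : (blockUnion G (𝓒 ∪ 𝓒₁ ∪ 𝓒₂)).Connected := by
      rw [blockUnion_union, blockUnion_union]
      have c0 : (blockUnion G 𝓒).Connected := connBlocks_of_connected hCc (hIC hB₁I)
      have c1 : (blockUnion G 𝓒₁).Connected := connBlocks_of_connected hc₁ (hs₁ hB₁)
      have c2 : (blockUnion G 𝓒₂).Connected := connBlocks_of_connected hc₂ (hs₂ hB₂)
      have h01 : (blockUnion G 𝓒 ⊔ blockUnion G 𝓒₁).Connected := by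
        apply SimpleGraph.Subgraph.connected_sup c0.preconnected c1.preconnected
        obtain ⟨v, hv⟩ := block_verts_nonempty B₁
        exact ⟨v, SimpleGraph.Subgraph.verts_mono (coe_le_blockUnion (hIC hB₁I)) hv,
          SimpleGraph.Subgraph.verts_mono (coe_le_blockUnion (hs₁ hB₁)) hv⟩
      apply SimpleGraph.Subgraph.connected_sup h01.preconnected c2.preconnected
      obtain ⟨v, hv⟩ := block_verts_nonempty B₂
      exact ⟨v, SimpleGraph.Subgraph.verts_mono
          ((coe_le_blockUnion (hIC hB₂I)).trans le_sup_left) hv,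
        SimpleGraph.Subgraph.verts_mono (coe_le_blockUnion (hs₂ hB₂)) hv⟩
    have hmem : B' ∈ 𝓒 ∪ 𝓒₁ ∪ 𝓒₂ := by
      apply mem_blockClosure.mp hB'mem
      · rintro B (hB | hB)
        · exact Or.inl (Or.inr (hs₁ hB))
        · exact Or.inr (hs₂ hB)
      · exact Or.inr hc
    rcases hmem with (h | h) | h
    · exact h
    · exact absurd h hn₁
    · exact absurd h hn₂
  refine ⟨hind, ?_, ?_, ?_, ?_, ?_⟩
  · -- zero outside closure
    intro B hB
    exact hβ₀ B (fun h => hB (hsub1 h)) (fun h => hB (hsub2 h)) (fun h => hB (h ▸ hB'mem))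
  · -- one on 𝓘₁ ∪ 𝓘₂
    rintro B (h | h)
    · rw [hβ₁ B (subset_blockClosure _ h)]; exact hone₁ B h
    · rw [hβ₂ B (subset_blockClosure _ h)]; exact hone₂ B h
  · -- nonpositive on closure minus 𝓘
    rintro B ⟨hBc, hBn⟩
    by_cases h1 : B ∈ blockClosure G 𝓘₁
    · rw [hβ₁ B h1]; exact hnp₁ B ⟨h1, fun hx => hBn (Or.inl hx)⟩
    by_cases h2 : B ∈ blockClosure G 𝓘₂
    · rw [hβ₂ B h2]; exact hnp₂ B ⟨h2, fun hx => hBn (Or.inr hx)⟩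
    by_cases h3 : B = B'
    · rw [h3, hβ']; omega
    · rw [hβ₀ B h1 h2 h3]
  · -- total sum
    have hd12 : Disjoint (blockClosure G 𝓘₁ \ 𝓘₁) (blockClosure G 𝓘₂ \ 𝓘₂) := by
      rw [Set.disjoint_left]
      rintro x ⟨hx1, -⟩ ⟨hx2, -⟩
      exact hdis x hx1 hx2
    have hdB' : Disjoint ((blockClosure G 𝓘₁ \ 𝓘₁) ∪ (blockClosure G 𝓘₂ \ 𝓘₂))
        ({B'} : Set (Block G)) := by
      rw [Set.disjoint_right]
      rintro x rfl
      rintro (⟨hx1, -⟩ | ⟨hx2, -⟩)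
      · exact hB'1 hx1
      · exact hB'2 hx2
    have hstep : ∑ᶠ B ∈ blockClosure G (𝓘₁ ∪ 𝓘₂) \ (𝓘₁ ∪ 𝓘₂), β B =
        ∑ᶠ B ∈ (blockClosure G 𝓘₁ \ 𝓘₁) ∪ (blockClosure G 𝓘₂ \ 𝓘₂) ∪ {B'}, β B := by
      apply finsum_mem_zero_diff
      · rintro x ((⟨hx1, hx2⟩ | ⟨hx1, hx2⟩) | hx)
        · refine ⟨hsub1 hx1, ?_⟩
          rintro (h | h)
          · exact hx2 h
          · exact hdis x hx1 (subset_blockClosure _ h)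
        · refine ⟨hsub2 hx1, ?_⟩
          rintro (h | h)
          · exact hdis x (subset_blockClosure _ h) hx1
          · exact hx2 h
        · rw [Set.mem_singleton_iff] at hx
          exact hx ▸ ⟨hB'mem, hB'nI⟩
      · rintro x ⟨hxc, hxn⟩ hxu
        apply hβ₀
        · intro h
          exact hxu (Or.inl (Or.inl ⟨h, fun h' => hxn (Or.inl h')⟩))
        · intro h
          exact hxu (Or.inl (Or.inr ⟨h, fun h' => hxn (Or.inr h')⟩))
        · intro h
          exact hxu (Or.inr (Set.mem_singleton_iff.mpr h))
    rw [hstep, finsum_mem_union hdB' (Set.toFinite _) (Set.toFinite _),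
      finsum_mem_union hd12 (Set.toFinite _) (Set.toFinite _), finsum_mem_singleton, hβ']
    have e1 : ∑ᶠ B ∈ blockClosure G 𝓘₁ \ 𝓘₁, β B = ∑ᶠ B ∈ blockClosure G 𝓘₁ \ 𝓘₁, α₁ B :=
      finsum_mem_congr rfl fun x hx => hβ₁ x hx.1
    have e2 : ∑ᶠ B ∈ blockClosure G 𝓘₂ \ 𝓘₂, β B = ∑ᶠ B ∈ blockClosure G 𝓘₂ \ 𝓘₂, α₂ B :=
      finsum_mem_congr rfl fun x hx => hβ₂ x hx.1
    rw [e1, e2, hsum₁, hsum₂, Set.ncard_union_eq hIdis (Set.toFinite _) (Set.toFinite _)]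
    push_cast
    ring
  · -- subset inequality
    intro I hI
    have hI₁ : I ∩ 𝓘₁ ⊆ 𝓘₁ := Set.inter_subset_right
    have hI₂ : I ∩ 𝓘₂ ⊆ 𝓘₂ := Set.inter_subset_right
    have hIeq : I = (I ∩ 𝓘₁) ∪ (I ∩ 𝓘₂) := by
      ext x
      constructor
      · intro hx
        rcases hI hx with h | h
        · exact Or.inl ⟨hx, h⟩
        · exact Or.inr ⟨hx, h⟩
      · rintro (⟨h, -⟩ | ⟨h, -⟩) <;> exact h
    have hIcard : I.ncard = (I ∩ 𝓘₁).ncard + (I ∩ 𝓘₂).ncard := by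
      conv_lhs => rw [hIeq]
      exact Set.ncard_union_eq (hIdis.mono hI₁ hI₂) (Set.toFinite _) (Set.toFinite _)
    set W := blockClosure G I \ (𝓘₁ ∪ 𝓘₂) with hW
    set A₁ := W ∩ blockClosure G 𝓘₁ with hA₁
    set A₂ := W ∩ blockClosure G 𝓘₂ with hA₂
    set A₃ := W ∩ {B'} with hA₃
    have hWsplit : ∑ᶠ B ∈ W, β B = ∑ᶠ B ∈ A₁ ∪ A₂ ∪ A₃, β B := by
      apply finsum_mem_zero_diff
      · rintro x ((⟨hx, -⟩ | ⟨hx, -⟩) | ⟨hx, -⟩) <;> exact hx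
      · rintro x hx hxu
        apply hβ₀
        · intro h; exact hxu (Or.inl (Or.inl ⟨hx, h⟩))
        · intro h; exact hxu (Or.inl (Or.inr ⟨hx, h⟩))
        · intro h; exact hxu (Or.inr ⟨hx, Set.mem_singleton_iff.mpr h⟩)
    have hd12 : Disjoint A₁ A₂ := by
      rw [Set.disjoint_left]
      rintro x ⟨-, hx1⟩ ⟨-, hx2⟩
      exact hdis x hx1 hx2
    have hdB' : Disjoint (A₁ ∪ A₂) A₃ := by
      rw [Set.disjoint_right]
      rintro x ⟨-, hx3⟩
      rw [Set.mem_singleton_iff] at hx3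
      subst hx3
      rintro (⟨-, hx1⟩ | ⟨-, hx2⟩)
      · exact hB'1 hx1
      · exact hB'2 hx2
    rw [hWsplit, finsum_mem_union hdB' (Set.toFinite _) (Set.toFinite _),
      finsum_mem_union hd12 (Set.toFinite _) (Set.toFinite _)]
    have e1 : ∑ᶠ B ∈ A₁, β B = ∑ᶠ B ∈ A₁, α₁ B :=
      finsum_mem_congr rfl fun x hx => hβ₁ x hx.2
    have e2 : ∑ᶠ B ∈ A₂, β B = ∑ᶠ B ∈ A₂, α₂ B :=
      finsum_mem_congr rfl fun x hx => hβ₂ x hx.2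
    rw [e1, e2]
    -- unconditional bounds
    have b1 : ∑ᶠ B ∈ A₁, α₁ B ≤ -(((I ∩ 𝓘₁).ncard : ℤ) - 1) := by
      refine le_trans (finsum_mem_le_diff α₁ ?_ ?_) (hineq₁ (I ∩ 𝓘₁) hI₁)
      · rintro x ⟨hx1, hx2⟩
        refine ⟨⟨blockClosure_mono Set.inter_subset_left hx1, ?_⟩,
          blockClosure_mono hI₁ hx1⟩
        rintro (h | h)
        · exact hx2 h
        · exact hdis x (blockClosure_mono hI₁ hx1) (subset_blockClosure _ h)
      · rintro x ⟨⟨-, hxn⟩, hx1⟩ -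
        exact hnp₁ x ⟨hx1, fun h => hxn (Or.inl h)⟩
    have b2 : ∑ᶠ B ∈ A₂, α₂ B ≤ -(((I ∩ 𝓘₂).ncard : ℤ) - 1) := by
      refine le_trans (finsum_mem_le_diff α₂ ?_ ?_) (hineq₂ (I ∩ 𝓘₂) hI₂)
      · rintro x ⟨hx1, hx2⟩
        refine ⟨⟨blockClosure_mono Set.inter_subset_left hx1, ?_⟩,
          blockClosure_mono hI₂ hx1⟩
        rintro (h | h)
        · exact hdis x (subset_blockClosure _ h) (blockClosure_mono hI₂ hx1)
        · exact hx2 h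
      · rintro x ⟨⟨-, hxn⟩, hx2⟩ -
        exact hnp₂ x ⟨hx2, fun h => hxn (Or.inr h)⟩
    have b1' : ∑ᶠ B ∈ A₁, α₁ B ≤ 0 := by
      apply finsum_mem_nonpos'
      rintro x ⟨⟨-, hxn⟩, hx1⟩
      exact hnp₁ x ⟨hx1, fun h => hxn (Or.inl h)⟩
    have b2' : ∑ᶠ B ∈ A₂, α₂ B ≤ 0 := by
      apply finsum_mem_nonpos'
      rintro x ⟨⟨-, hxn⟩, hx2⟩
      exact hnp₂ x ⟨hx2, fun h => hxn (Or.inr h)⟩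
    have b3' : ∑ᶠ B ∈ A₃, β B ≤ 0 := by
      apply finsum_mem_nonpos'
      rintro x ⟨-, hx3⟩
      rw [Set.mem_singleton_iff] at hx3
      rw [hx3, hβ']
      omega
    rcases Set.eq_empty_or_nonempty (I ∩ 𝓘₁) with hne1 | hne1
    · -- I ∩ 𝓘₁ = ∅
      have hc : (I.ncard : ℤ) = ((I ∩ 𝓘₂).ncard : ℤ) := by
        have h0 : (I ∩ 𝓘₁).ncard = 0 := by rw [hne1]; simp
        rw [hIcard, h0]; push_cast; ring
      linarith
    · rcases Set.eq_empty_or_nonempty (I ∩ 𝓘₂) with hne2 | hne2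
      · have hc : (I.ncard : ℤ) = ((I ∩ 𝓘₁).ncard : ℤ) := by
          have h0 : (I ∩ 𝓘₂).ncard = 0 := by rw [hne2]; simp
          rw [hIcard, h0]; push_cast; ring
        linarith
      · -- both nonempty
        have hB'W : B' ∈ W := ⟨key I hI hne1 hne2, hB'nI⟩
        have hA₃eq : A₃ = {B'} := by
          apply Set.eq_singleton_iff_unique_mem.mpr
          exact ⟨⟨hB'W, rfl⟩, fun x hx => hx.2⟩
        rw [hA₃eq, finsum_mem_singleton, hβ']
        have hc : (I.ncard : ℤ) = ((I ∩ 𝓘₁).ncard : ℤ) + ((I ∩ 𝓘₂).ncard : ℤ) := by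
          rw [hIcard]; push_cast; ring
        linarith

end ConnectedBlocksPaper
end
end
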